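/- Lower and upper conditioning coincide with classical conditioning on diagonal states: Let ω be a state and p a predicate on Fin n with ∑_i ω i * p i ≠ 0, and let ω̂ := diagonal(ω) and p̂ := diagonal(p) be the associated diagonal complex matrices. Then (√p̂ * ω̂ * √p̂) / tr(ω̂ * p̂) = diagonal(ω|_p) = (√ω̂ * p̂ * √ω̂) / tr(ω̂ * p̂), where ω|_p (i) := ω i * p i / (∑_j ω j * p j) is the classical conditioned state. -/

import Mathlib

open Matrix
open scoped ComplexOrder

/-- The positive semidefinite square root of a positive semidefinite matrix
(as `Matrix.PosSemidef.sqrt` was defined in the older Mathlib). -/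
noncomputable def Matrix.PosSemidef.sqrt {n 𝕜 : Type*} [Fintype n] [DecidableEq n] [RCLike 𝕜]
    {A : Matrix n n 𝕜} (hA : A.PosSemidef) : Matrix n n 𝕜 :=
  hA.1.eigenvectorUnitary.1 * diagonal ((↑) ∘ (√·) ∘ hA.1.eigenvalues) *
    (star hA.1.eigenvectorUnitary : Matrix n n 𝕜)

lemma sqrt_diag_aux {n : ℕ} (f : Fin n → ℝ) (hf : ∀ i, 0 ≤ f i)
    (hpsd : (Matrix.diagonal fun i => (f i : ℂ)).PosSemidef) :
    hpsd.sqrt = Matrix.diagonal fun i => (Real.sqrt (f i) : ℂ) := by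
  set U := (hpsd.1.eigenvectorUnitary : Matrix (Fin n) (Fin n) ℂ) with hUdef
  have hspec := hpsd.1.spectral_theorem
  rw [Unitary.conjStarAlgAut_apply] at hspec
  have hUU : (star hpsd.1.eigenvectorUnitary : Matrix (Fin n) (Fin n) ℂ) * U = 1 :=
    Unitary.coe_star_mul_self _
  have hUU' : U * star U = 1 :=
    Unitary.coe_mul_star_self _
  have hAU : (Matrix.diagonal fun i => (f i : ℂ)) * U
      = U * diagonal (RCLike.ofReal ∘ hpsd.1.eigenvalues) := by
    conv_lhs => rw [hspec]
    rw [mul_assoc, hUU, mul_one]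
  have hent : ∀ i j, U i j ≠ 0 → f i = hpsd.1.eigenvalues j := by
    intro i j hij
    have h := congrFun (congrFun hAU i) j
    rw [diagonal_mul, mul_diagonal, mul_comm] at h
    have h2 := mul_left_cancel₀ hij h
    simpa using h2
  have hsq : (Matrix.diagonal fun i => (Real.sqrt (f i) : ℂ)) * U
      = U * diagonal (RCLike.ofReal ∘ (√·) ∘ hpsd.1.eigenvalues) := by
    ext i j
    rw [diagonal_mul, mul_diagonal]
    by_cases hij : U i j = 0
    · simp [hij]
    · simp [hent i j hij, mul_comm]
  unfold Matrix.PosSemidef.sqrt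
  rw [← hUdef, ← hsq, mul_assoc, hUU', mul_one]

lemma key {n : ℕ} (ω p : Fin n → ℝ) (hω : ∀ i, 0 ≤ ω i)
    (hv : (∑ i, ω i * p i) ≠ 0)
    (hppsd : (Matrix.diagonal fun i => (p i : ℂ)).PosSemidef)
    (hp : ∀ i, 0 ≤ p i) :
    (((Matrix.diagonal fun i => (ω i : ℂ)) * (Matrix.diagonal fun i => (p i : ℂ))).trace)⁻¹
        • (hppsd.sqrt * (Matrix.diagonal fun i => (ω i : ℂ)) * hppsd.sqrt)
      = (Matrix.diagonal fun i => ((ω i * p i / ∑ j, ω j * p j : ℝ) : ℂ)) := by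
  rw [sqrt_diag_aux p hp hppsd, Matrix.diagonal_mul_diagonal,
    Matrix.diagonal_mul_diagonal, Matrix.diagonal_mul_diagonal,
    Matrix.trace_diagonal, ← Matrix.diagonal_smul]
  have hc : (∑ i, (ω i : ℂ) * (p i : ℂ)) = ((∑ i, ω i * p i : ℝ) : ℂ) := by
    push_cast; rfl
  have hfun : ((∑ i, (ω i : ℂ) * (p i : ℂ))⁻¹
        • fun i => (Real.sqrt (p i) : ℂ) * (ω i : ℂ) * (Real.sqrt (p i) : ℂ))
      = fun i => ((ω i * p i / ∑ j, ω j * p j : ℝ) : ℂ) := by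
    funext i
    simp only [Pi.smul_apply, smul_eq_mul, hc]
    have hsq : (Real.sqrt (p i)) * (ω i) * (Real.sqrt (p i)) = ω i * p i := by
      rw [mul_comm (Real.sqrt (p i)) (ω i), mul_assoc, Real.mul_self_sqrt (hp i)]
    rw [← Complex.ofReal_mul, ← Complex.ofReal_mul, hsq, Complex.ofReal_div, div_eq_inv_mul]
  rw [hfun]

/-- On diagonal (classical) states, lower and upper quantum conditioning both
coincide with classical conditioning. -/
theorem diagonal_conditioning_classical {n : ℕ}
    (ω p : Fin n → ℝ)
    (hω : ∀ i, 0 ≤ ω i) (hωsum : ∑ i, ω i = 1)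
    (hp : ∀ i, 0 ≤ p i ∧ p i ≤ 1)
    (hv : (∑ i, ω i * p i) ≠ 0)
    (hωpsd : (Matrix.diagonal fun i => (ω i : ℂ)).PosSemidef)
    (hppsd : (Matrix.diagonal fun i => (p i : ℂ)).PosSemidef) :
    (((Matrix.diagonal fun i => (ω i : ℂ)) * (Matrix.diagonal fun i => (p i : ℂ))).trace)⁻¹
        • (hppsd.sqrt * (Matrix.diagonal fun i => (ω i : ℂ)) * hppsd.sqrt)
      = (Matrix.diagonal fun i => ((ω i * p i / ∑ j, ω j * p j : ℝ) : ℂ)) ∧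
    (((Matrix.diagonal fun i => (ω i : ℂ)) * (Matrix.diagonal fun i => (p i : ℂ))).trace)⁻¹
        • (hωpsd.sqrt * (Matrix.diagonal fun i => (p i : ℂ)) * hωpsd.sqrt)
      = (Matrix.diagonal fun i => ((ω i * p i / ∑ j, ω j * p j : ℝ) : ℂ)) := by
  constructor
  · exact key ω p hω hv hppsd fun i => (hp i).1
  · have h2 := key p ω (fun i => (hp i).1) (by
      simpa [mul_comm] using hv) hωpsd hω
    have htr : ((Matrix.diagonal fun i => (ω i : ℂ)) * (Matrix.diagonal fun i => (p i : ℂ))).trace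
        = ((Matrix.diagonal fun i => (p i : ℂ)) * (Matrix.diagonal fun i => (ω i : ℂ))).trace := by
      rw [Matrix.trace_mul_comm]
    rw [htr, h2]
    have : (fun i => ((p i * ω i / ∑ j, p j * ω j : ℝ) : ℂ))
        = fun i => ((ω i * p i / ∑ j, ω j * p j : ℝ) : ℂ) := by
      funext i
      simp [mul_comm]
    rw [this]
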